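/- arXiv:1903.07380 — 2 statements merged into one kernel-verified Lean document; each statement's English description precedes it below -/
import Mathlib

section
/- Let k be a field of characteristic 2 and A = k[x]/(x^n). The Lie algebra Der(A) of all derivations of A has derived length at most two, i.e., [[Der(A), Der(A)], [Der(A), Der(A)]] = 0. -/
open Polynomial

set_option synthInstance.maxHeartbeats 1000000
set_option maxHeartbeats 1000000

/-- In characteristic 2, the second derivative of any polynomial vanishes. -/
lemma second_derivative_char_two {k : Type*} [Field k] [CharP k 2] (p : k[X]) :
    derivative (derivative p) = 0 := by
  ext i
  simp only [coeff_derivative, coeff_zero]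
  have h2 : ((i + 1 : ℕ) : k) * ((i + 1 + 1 : ℕ) : k) = 0 := by
    have : (2 : ℕ) ∣ (i + 1) * (i + 1 + 1) := (Nat.even_mul_succ_self (i + 1)).two_dvd
    have := (CharP.cast_eq_zero_iff k 2 _).mpr this
    push_cast at this ⊢
    linear_combination this
  push_cast at h2 ⊢
  linear_combination p.coeff (i + 1 + 1) * h2

/-- Over a field of characteristic 2, the Lie algebra of all derivations of `k[x]/(xⁿ)` has
derived length at most two: the second term of its derived series vanishes. -/
theorem stmt7 {k : Type*} [Field k] [CharP k 2] (n : ℕ) :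
    LieAlgebra.derivedSeries k
      (Derivation k (k[X] ⧸ Ideal.span {(X : k[X]) ^ n})
        (k[X] ⧸ Ideal.span {(X : k[X]) ^ n})) 2 = ⊥ := by
  set A := k[X] ⧸ Ideal.span {(X : k[X]) ^ n} with hA
  set L := Derivation k A A with hL
  let φ : k[X] →ₐ[k] A := Ideal.Quotient.mkₐ k (Ideal.span {(X : k[X]) ^ n})
  let x : A := φ X
  -- every element of A is a polynomial in x
  have hsurj : ∀ a : A, ∃ p : k[X], aeval x p = a := by
    intro a
    obtain ⟨p, rfl⟩ := Ideal.Quotient.mkₐ_surjective k _ a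
    exact ⟨p, by rw [show x = φ X from rfl, Polynomial.aeval_algHom_apply, aeval_X_left_apply]⟩
  have hadj : Algebra.adjoin k ({x} : Set A) = ⊤ := by
    rw [Algebra.adjoin_singleton_eq_range_aeval]
    exact top_le_iff.mp fun a _ => hsurj a
  -- derivations agreeing at x are equal
  have hext : ∀ D E : L, D x = E x → D = E := by
    intro D E h
    exact Derivation.ext_of_adjoin_eq_top {x} hadj (by rintro y rfl; exact h)
  -- any bracket of derivations evaluates at x to a derivative
  have hbr : ∀ D E : L, ∃ h : k[X], ⁅D, E⁆ x = aeval x (derivative h) := by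
    intro D E
    obtain ⟨f, hf⟩ := hsurj (D x)
    obtain ⟨g, hg⟩ := hsurj (E x)
    refine ⟨f * g, ?_⟩
    have : ⁅D, E⁆ x = D (E x) - E (D x) := rfl
    rw [this, ← hf, ← hg, Derivation.map_aeval, Derivation.map_aeval, ← hf, ← hg,
      smul_eq_mul, smul_eq_mul, ← map_mul, ← map_mul, ← map_sub]
    congr 1
    rw [CharTwo.sub_eq_add, derivative_mul]
    ring
  -- the set of derivations whose value at x is a derivative, as a Lie ideal
  let S : LieIdeal k L :=
    { carrier := {D : L | ∃ h : k[X], D x = aeval x (derivative h)}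
      add_mem' := by
        rintro D E ⟨h1, hh1⟩ ⟨h2, hh2⟩
        exact ⟨h1 + h2, by rw [Derivation.add_apply, hh1, hh2, map_add, map_add]⟩
      zero_mem' := ⟨0, by rw [Derivation.zero_apply]; simp⟩
      smul_mem' := by
        rintro c D ⟨h1, hh1⟩
        refine ⟨C c * h1, ?_⟩
        rw [Derivation.smul_apply, hh1, derivative_C_mul, map_mul, aeval_C, Algebra.smul_def]
      lie_mem := fun {E D} _ => hbr E D }
  have hS1 : LieAlgebra.derivedSeries k L 1 ≤ S := by
    rw [LieAlgebra.derivedSeries_def, LieAlgebra.derivedSeriesOfIdeal_succ,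
      LieAlgebra.derivedSeriesOfIdeal_zero, LieSubmodule.lieIdeal_oper_eq_span,
      LieSubmodule.lieSpan_le]
    rintro D ⟨E, F, rfl⟩
    exact hbr E F
  -- brackets of two elements of S vanish
  have hSS : ∀ D E : L, D ∈ S → E ∈ S → ⁅D, E⁆ = 0 := by
    rintro D E ⟨h1, hh1⟩ ⟨h2, hh2⟩
    apply hext ⁅D, E⁆ 0
    have : ⁅D, E⁆ x = D (E x) - E (D x) := rfl
    rw [this, hh1, hh2, Derivation.map_aeval, Derivation.map_aeval,
      second_derivative_char_two, second_derivative_char_two]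
    rw [map_zero]
    simp
    rfl
  have h2 : LieAlgebra.derivedSeries k L 2 =
      ⁅LieAlgebra.derivedSeries k L 1, LieAlgebra.derivedSeries k L 1⁆ := by
    rw [LieAlgebra.derivedSeries_def, LieAlgebra.derivedSeriesOfIdeal_succ]
  rw [h2, LieSubmodule.lieIdeal_oper_eq_span]
  rw [eq_bot_iff, LieSubmodule.lieSpan_le]
  rintro D ⟨E, F, rfl⟩
  have : ⁅(E : L), (F : L)⁆ = 0 := hSS E F (hS1 E.2) (hS1 F.2)
  simp [this]
end

section
/- Let k be a field of characteristic p ≥ 3 and A = k[x]/(x^p). Then the Lie algebra Der(A) (the Witt algebra) is not solvable. -/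
open Polynomial

set_option synthInstance.maxHeartbeats 1000000
set_option maxHeartbeats 1000000

section WittAux

variable {k : Type*} [Field k] (p : ℕ) [CharP k p]

/-- The derivation `g * d/dx` on `k[X]/(X^p)`. -/
noncomputable def wittE (g : k[X]) :
    Derivation k (k[X] ⧸ Ideal.span {(X : k[X]) ^ p})
      (k[X] ⧸ Ideal.span {(X : k[X]) ^ p}) :=
  Derivation.liftOfSurjective
    (f := Ideal.Quotient.mkₐ k (Ideal.span {(X : k[X]) ^ p}))
    (Ideal.Quotient.mkₐ_surjective k _)
    (d := Polynomial.mkDerivation k g)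
    (fun h hh => by
      simp only [Ideal.Quotient.mkₐ_eq_mk, Ideal.Quotient.eq_zero_iff_mem] at hh ⊢
      obtain ⟨c, rfl⟩ := Ideal.mem_span_singleton.mp hh
      rw [Polynomial.mkDerivation_apply, smul_eq_mul]
      apply Ideal.mem_span_singleton.mpr
      have hp0 : (C ((p : k)) : k[X]) = 0 := by
        rw [CharP.cast_eq_zero, map_zero]
      rw [derivative_mul, derivative_X_pow, hp0]
      exact ⟨derivative c * g, by ring⟩)

lemma wittE_apply (g h : k[X]) :
    wittE p g (Ideal.Quotient.mk (Ideal.span {(X : k[X]) ^ p}) h) =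
      Ideal.Quotient.mk (Ideal.span {(X : k[X]) ^ p}) (derivative h * g) := by
  have := Derivation.liftOfSurjective_apply
    (f := Ideal.Quotient.mkₐ k (Ideal.span {(X : k[X]) ^ p}))
    (Ideal.Quotient.mkₐ_surjective k _)
    (d := Polynomial.mkDerivation k g)
    (fun h hh => by
      simp only [Ideal.Quotient.mkₐ_eq_mk, Ideal.Quotient.eq_zero_iff_mem] at hh ⊢
      obtain ⟨c, rfl⟩ := Ideal.mem_span_singleton.mp hh
      rw [Polynomial.mkDerivation_apply, smul_eq_mul]
      apply Ideal.mem_span_singleton.mpr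
      have hp0 : (C ((p : k)) : k[X]) = 0 := by
        rw [CharP.cast_eq_zero, map_zero]
      rw [derivative_mul, derivative_X_pow, hp0]
      exact ⟨derivative c * g, by ring⟩) h
  simpa [wittE, Polynomial.mkDerivation_apply, smul_eq_mul,
    Ideal.Quotient.mkₐ_eq_mk, mul_comm] using this

lemma witt_adjoin :
    Algebra.adjoin k
      {Ideal.Quotient.mk (Ideal.span {(X : k[X]) ^ p}) X} = ⊤ := by
  have h1 : (Algebra.adjoin k {(X : k[X])}).map
      (Ideal.Quotient.mkₐ k (Ideal.span {(X : k[X]) ^ p})) = ⊤ := by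
    rw [Polynomial.adjoin_X, Algebra.map_top]
    exact (AlgHom.range_eq_top _).mpr (Ideal.Quotient.mkₐ_surjective k _)
  rw [AlgHom.map_adjoin, Set.image_singleton] at h1
  simpa using h1

lemma wittE_ext {D1 D2 : Derivation k (k[X] ⧸ Ideal.span {(X : k[X]) ^ p})
    (k[X] ⧸ Ideal.span {(X : k[X]) ^ p})}
    (h : D1 (Ideal.Quotient.mk (Ideal.span {(X : k[X]) ^ p}) X) =
      D2 (Ideal.Quotient.mk (Ideal.span {(X : k[X]) ^ p}) X)) : D1 = D2 := by
  apply Derivation.ext_of_adjoin_eq_top _ (witt_adjoin p)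
  intro a ha
  rw [Set.mem_singleton_iff] at ha
  subst ha
  exact h

lemma wittE_bracket (g h : k[X]) :
    ⁅wittE p g, wittE p h⁆ =
      wittE p (g * derivative h - h * derivative g) := by
  apply wittE_ext p
  rw [Derivation.commutator_apply, wittE_apply, wittE_apply, wittE_apply,
    wittE_apply, wittE_apply, ← map_sub]
  congr 1
  simp only [derivative_X, one_mul, derivative_mul]
  ring

end WittAux

/-- Over a field of characteristic `p ≥ 3`, the Lie algebra of derivations of `k[x]/(x^p)`
(the Witt algebra) is not solvable. -/
theorem stmt9 {k : Type*} [Field k] (p : ℕ) [CharP k p] (hp : 3 ≤ p) :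
    ¬ LieAlgebra.IsSolvable
      (Derivation k (k[X] ⧸ Ideal.span {(X : k[X]) ^ p})
        (k[X] ⧸ Ideal.span {(X : k[X]) ^ p})) := by
  intro hs
  have h2 : (2 : k) ≠ 0 := by
    intro h
    have : (p : ℕ) ∣ 2 := by
      have := (CharP.cast_eq_zero_iff k p 2).mp (by exact_mod_cast h)
      exact this
    have := Nat.le_of_dvd (by norm_num) this
    omega
  -- bracket relations
  have hb1 : ⁅wittE p (1 : k[X]), wittE p (X : k[X])⁆ = wittE p (1 : k[X]) := by
    rw [wittE_bracket]; congr 1; simp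
  have hb2 : ⁅wittE p (1 : k[X]), wittE p ((X : k[X]) ^ 2)⁆ = (2 : k) • wittE p (X : k[X]) := by
    apply wittE_ext p
    rw [Derivation.commutator_apply, wittE_apply, wittE_apply, wittE_apply, wittE_apply]
    have : ((2 : k) • wittE p (X : k[X]))
        (Ideal.Quotient.mk (Ideal.span {(X : k[X]) ^ p}) X) =
        (2 : k) • (wittE p (X : k[X]) (Ideal.Quotient.mk (Ideal.span {(X : k[X]) ^ p}) X)) := rfl
    rw [this, wittE_apply, ← Ideal.Quotient.mkₐ_eq_mk k (Ideal.span {(X : k[X]) ^ p}),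
      ← map_smul, Ideal.Quotient.mkₐ_eq_mk, ← map_sub]
    congr 1
    simp only [derivative_X, one_mul, mul_one, derivative_one, derivative_mul,
      derivative_X_pow, Polynomial.smul_eq_C_mul, map_ofNat]
    push_cast
    simp only [map_ofNat]
    ring
  have hb3 : ⁅wittE p (X : k[X]), wittE p ((X : k[X]) ^ 2)⁆ = wittE p ((X : k[X]) ^ 2) := by
    rw [wittE_bracket]; congr 1
    simp only [derivative_X_pow, derivative_X, mul_one, map_ofNat]
    push_cast
    simp only [map_ofNat]
    ring
  obtain ⟨n, hn⟩ := (LieAlgebra.isSolvable_iff k _).mp hs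
  have key : ∀ n,
      wittE p (1 : k[X]) ∈ LieAlgebra.derivedSeries k
        (Derivation k (k[X] ⧸ Ideal.span {(X : k[X]) ^ p})
          (k[X] ⧸ Ideal.span {(X : k[X]) ^ p})) n ∧
      wittE p (X : k[X]) ∈ LieAlgebra.derivedSeries k
        (Derivation k (k[X] ⧸ Ideal.span {(X : k[X]) ^ p})
          (k[X] ⧸ Ideal.span {(X : k[X]) ^ p})) n ∧
      wittE p ((X : k[X]) ^ 2) ∈ LieAlgebra.derivedSeries k
        (Derivation k (k[X] ⧸ Ideal.span {(X : k[X]) ^ p})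
          (k[X] ⧸ Ideal.span {(X : k[X]) ^ p})) n := by
    intro m
    induction m with
    | zero =>
      refine ⟨?_, ?_, ?_⟩ <;>
        simp [LieAlgebra.derivedSeries, LieAlgebra.derivedSeriesOfIdeal_zero]
    | succ m ih =>
      obtain ⟨ha, hb, hc⟩ := ih
      rw [LieAlgebra.derivedSeries_def, LieAlgebra.derivedSeriesOfIdeal_succ,
        ← LieAlgebra.derivedSeries_def]
      refine ⟨?_, ?_, ?_⟩
      · have := LieSubmodule.lie_mem_lie ha hb
        rwa [hb1] at this
      · have h := LieSubmodule.lie_mem_lie ha hc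
        rw [hb2] at h
        have h' := (⁅LieAlgebra.derivedSeries k _ m, LieAlgebra.derivedSeries k _ m⁆ :
          LieIdeal k _).smul_mem ((2 : k)⁻¹) h
        rwa [smul_smul, inv_mul_cancel₀ h2, one_smul] at h'
      · have := LieSubmodule.lie_mem_lie hb hc
        rwa [hb3] at this
  have h1 := (key n).1
  rw [hn, LieSubmodule.mem_bot] at h1
  have h0 : wittE p (1 : k[X]) (Ideal.Quotient.mk (Ideal.span {(X : k[X]) ^ p}) X) = 0 := by
    rw [h1]; rfl
  rw [wittE_apply] at h0
  simp only [derivative_X, one_mul] at h0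
  have hmem : (1 : k[X]) ∈ Ideal.span {(X : k[X]) ^ p} :=
    Ideal.Quotient.eq_zero_iff_mem.mp h0
  have hu : IsUnit ((X : k[X]) ^ p) :=
    isUnit_of_dvd_one (Ideal.mem_span_singleton.mp hmem)
  have := Polynomial.natDegree_eq_zero_of_isUnit hu
  rw [Polynomial.natDegree_X_pow] at this
  omega
end
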